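/- Define the modulation encoder E : {1,2,3,4} → ℂ by E(1) = 1, E(2) = −1, E(3) = i, E(4) = −i, and the channel code c : {1,2,3,4} → {0,1}² by c(x) = (1,0) if x ∈ {1,3} and c(x) = (0,1) if x ∈ {2,4}. For a tuple (x₁,x₂,x₃,x₄) ∈ {1,2,3,4}⁴ let y(x) = (∑_{k=1}^4 E(x_k) c(x_k)₁, ∑_{k=1}^4 E(x_k) c(x_k)₂) ∈ ℂ². Then for all tuples x, x' ∈ {1,2,3,4}⁴, if x₁x₂x₃x₄ ≠ x₁'x₂'x₃'x₄' then y(x) ≠ y(x'); that is, the noiseless two-slot received pair uniquely determines the product x₁x₂x₃x₄. -/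
import Mathlib


/-- The QPSK-type modulation encoder `E(1)=1, E(2)=−1, E(3)=i, E(4)=−i`. -/
noncomputable def modEnc14 : ℕ → ℂ := fun x =>
  if x = 1 then 1 else if x = 2 then -1 else if x = 3 then Complex.I else
    if x = 4 then -Complex.I else 0

/-- The channel code over `L = 2` time slots: `c(x) = (1,0)` if `x ∈ {1,3}` and
`c(x) = (0,1)` if `x ∈ {2,4}` (components given as complex indicators). -/
noncomputable def chanCode : ℕ → ℂ × ℂ := fun x =>
  if x = 1 ∨ x = 3 then (1, 0) else (0, 1)

/-- The noiseless two-slot received pair. -/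
noncomputable def rxPair (x : Fin 4 → ℕ) : ℂ × ℂ :=
  (∑ k, modEnc14 (x k) * (chanCode (x k)).1, ∑ k, modEnc14 (x k) * (chanCode (x k)).2)

lemma term1 (n : ℕ) (hn : n ∈ ({1, 2, 3, 4} : Set ℕ)) :
    modEnc14 n * (chanCode n).1 =
      (if n = 1 then 1 else 0) + (if n = 3 then 1 else 0) * Complex.I := by
  rcases hn with h | h | h | h <;> subst h <;> simp [modEnc14, chanCode]

lemma term2 (n : ℕ) (hn : n ∈ ({1, 2, 3, 4} : Set ℕ)) :
    modEnc14 n * (chanCode n).2 =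
      -((if n = 2 then 1 else 0) + (if n = 4 then 1 else 0) * Complex.I) := by
  rcases hn with h | h | h | h <;> subst h <;> simp [modEnc14, chanCode]

lemma rx_eq (x : Fin 4 → ℕ) (hx : ∀ k, x k ∈ ({1, 2, 3, 4} : Set ℕ)) :
    rxPair x =
      (((Finset.univ.filter (fun k => x k = 1)).card : ℂ) +
        ((Finset.univ.filter (fun k => x k = 3)).card : ℂ) * Complex.I,
       -(((Finset.univ.filter (fun k => x k = 2)).card : ℂ) +
        ((Finset.univ.filter (fun k => x k = 4)).card : ℂ) * Complex.I)) := by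
  unfold rxPair
  have h1 : ∀ k : Fin 4, modEnc14 (x k) * (chanCode (x k)).1 =
      (if x k = 1 then 1 else 0) + (if x k = 3 then 1 else 0) * Complex.I :=
    fun k => term1 _ (hx k)
  have h2 : ∀ k : Fin 4, modEnc14 (x k) * (chanCode (x k)).2 =
      -((if x k = 2 then 1 else 0) + (if x k = 4 then 1 else 0) * Complex.I) :=
    fun k => term2 _ (hx k)
  simp only [h1, h2, Finset.card_filter]
  push_cast
  congr 1
  · rw [Finset.sum_add_distrib, Finset.sum_mul]
  · rw [Finset.sum_neg_distrib, Finset.sum_add_distrib, Finset.sum_mul]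

lemma prod_eq (x : Fin 4 → ℕ) (hx : ∀ k, x k ∈ ({1, 2, 3, 4} : Set ℕ)) :
    (∏ k, x k) =
      2 ^ (Finset.univ.filter (fun k => x k = 2)).card *
      3 ^ (Finset.univ.filter (fun k => x k = 3)).card *
      4 ^ (Finset.univ.filter (fun k => x k = 4)).card := by
  have h : ∀ k : Fin 4, x k =
      2 ^ (if x k = 2 then 1 else 0) * 3 ^ (if x k = 3 then 1 else 0) *
        4 ^ (if x k = 4 then 1 else 0) := by
    intro k
    rcases hx k with h | h | h | h <;> rw [h] <;> norm_num
  calc (∏ k, x k) = ∏ k, (2 ^ (if x k = 2 then 1 else 0) * 3 ^ (if x k = 3 then 1 else 0) *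
        4 ^ (if x k = 4 then 1 else 0)) := Finset.prod_congr rfl (fun k _ => h k)
    _ = _ := by
        rw [Finset.prod_mul_distrib, Finset.prod_mul_distrib,
          Finset.prod_pow_eq_pow_sum, Finset.prod_pow_eq_pow_sum, Finset.prod_pow_eq_pow_sum,
          Finset.card_filter, Finset.card_filter, Finset.card_filter]

/-- Correctness of the illustrative two-slot scheme (Table I): for all tuples
`x, x' ∈ {1,2,3,4}⁴`, if the products differ then the noiseless two-slot
received pairs differ; i.e., the received pair uniquely determines the product. -/
theorem stmt_14 :
    ∀ x x' : Fin 4 → ℕ,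
      (∀ k, x k ∈ ({1, 2, 3, 4} : Set ℕ)) → (∀ k, x' k ∈ ({1, 2, 3, 4} : Set ℕ)) →
      (∏ k, x k) ≠ (∏ k, x' k) → rxPair x ≠ rxPair x' := by
  intro x x' hx hx' hne heq
  apply hne
  rw [rx_eq x hx, rx_eq x' hx', Prod.ext_iff] at heq
  obtain ⟨h1, h2⟩ := heq
  have h2' := neg_injective h2
  have key : ∀ (a c a' c' : ℕ), ((a : ℂ) + (c : ℂ) * Complex.I = (a' : ℂ) + (c' : ℂ) * Complex.I)
      → a = a' ∧ c = c' := by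
    intro a c a' c' h
    have hre := congrArg Complex.re h
    have him := congrArg Complex.im h
    simp at hre him
    exact ⟨Nat.cast_injective hre, Nat.cast_injective him⟩
  obtain ⟨_, hc⟩ := key _ _ _ _ h1
  obtain ⟨hb, hd⟩ := key _ _ _ _ h2'
  rw [prod_eq x hx, prod_eq x' hx', hb, hc, hd]
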